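/- A quaternate Dyck crossword picture is neutralizable if and only if its precedence relation between rectangles is acyclic (equivalently, irreflexive). -/

import Mathlib

/-- The alphabet Δ₁ = {a, b, c, d}. -/
inductive Del : Type
  | a | b | c | d
deriving DecidableEq

/-- Row cancellation: pairs [a,b] and [c,d]. -/
def rowStep (w w' : List Del) : Prop :=
  ∃ (u v : List Del),
    (w = u ++ [Del.a, Del.b] ++ v ∨ w = u ++ [Del.c, Del.d] ++ v) ∧ w' = u ++ v

/-- The row Dyck language D^Row. -/
def DRow (w : List Del) : Prop := Relation.ReflTransGen rowStep w []

/-- Column cancellation: pairs [a,c] and [b,d]. -/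
def colStep (w w' : List Del) : Prop :=
  ∃ (u v : List Del),
    (w = u ++ [Del.a, Del.c] ++ v ∨ w = u ++ [Del.b, Del.d] ++ v) ∧ w' = u ++ v

/-- The column Dyck language D^Col. -/
def DCol (w : List Del) : Prop := Relation.ReflTransGen colStep w []

/-- Row i (of length n) of a picture. -/
def row (p : ℕ → ℕ → Del) (n i : ℕ) : List Del := (List.range n).map (p i)

/-- Column j (of length m) of a picture. -/
def col (p : ℕ → ℕ → Del) (m j : ℕ) : List Del :=
  (List.range m).map (fun i => p i j)

/-- The Dyck crossword language DC₁: nonempty pictures all of whose rows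
are in D^Row and all of whose columns are in D^Col. -/
def DC (m n : ℕ) (p : ℕ → ℕ → Del) : Prop :=
  1 ≤ m ∧ 1 ≤ n ∧ (∀ i < m, DRow (row p n i)) ∧ (∀ j < n, DCol (col p m j))

/-- Positions `j < j'` match in a row word: the letters form a row matching
pair ([a,b] or [c,d]) and the factor strictly between them is in D^Row. -/
def rowMatchW (w : List Del) (j j' : ℕ) : Prop :=
  j < j' ∧ j' < w.length ∧
    ((w[j]? = some Del.a ∧ w[j']? = some Del.b) ∨
      (w[j]? = some Del.c ∧ w[j']? = some Del.d)) ∧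
    DRow ((w.drop (j + 1)).take (j' - (j + 1)))

/-- Positions `i < i'` match in a column word: the letters form a column
matching pair ([a,c] or [b,d]) and the factor strictly between them is in
D^Col. -/
def colMatchW (w : List Del) (i i' : ℕ) : Prop :=
  i < i' ∧ i' < w.length ∧
    ((w[i]? = some Del.a ∧ w[i']? = some Del.c) ∨
      (w[i]? = some Del.b ∧ w[i']? = some Del.d)) ∧
    DCol ((w.drop (i + 1)).take (i' - (i + 1)))

/-- Row edge of the matching graph of picture `p` (of size m×n) between cells
`u` and `v`: same row, matched positions (in either order). -/
def rowEdge (p : ℕ → ℕ → Del) (n : ℕ) (u v : ℕ × ℕ) : Prop :=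
  u.1 = v.1 ∧ (rowMatchW (row p n u.1) u.2 v.2 ∨ rowMatchW (row p n u.1) v.2 u.2)

/-- Column edge of the matching graph between cells `u` and `v`. -/
def colEdge (p : ℕ → ℕ → Del) (m : ℕ) (u v : ℕ × ℕ) : Prop :=
  u.2 = v.2 ∧ (colMatchW (col p m u.2) u.1 v.1 ∨ colMatchW (col p m u.2) v.1 u.1)

/-- Adjacency in the matching graph. -/
def adj (p : ℕ → ℕ → Del) (m n : ℕ) (u v : ℕ × ℕ) : Prop :=
  rowEdge p n u v ∨ colEdge p m u v

/-- The alphabet Δ₁ ∪ {N}. -/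
inductive DelN : Type
  | a | b | c | d | N
deriving DecidableEq

def embed : Del → DelN
  | Del.a => DelN.a
  | Del.b => DelN.b
  | Del.c => DelN.c
  | Del.d => DelN.d

/-- One neutralization step inside an m×n picture: a subpicture of size at
least 2×2 whose four corners are a, b, c, d and whose remaining cells are
all N is replaced by an all-N subpicture. -/
def nstep (m n : ℕ) (q q' : ℕ → ℕ → DelN) : Prop :=
  ∃ (i j i' j' : ℕ), i < i' ∧ j < j' ∧ i' < m ∧ j' < n ∧
    q i j = DelN.a ∧ q i j' = DelN.b ∧ q i' j = DelN.c ∧ q i' j' = DelN.d ∧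
    (∀ r s, i ≤ r → r ≤ i' → j ≤ s → s ≤ j' →
      ¬((r = i ∨ r = i') ∧ (s = j ∨ s = j')) → q r s = DelN.N) ∧
    (∀ r s, (i ≤ r ∧ r ≤ i' ∧ j ≤ s ∧ s ≤ j') → q' r s = DelN.N) ∧
    (∀ r s, ¬(i ≤ r ∧ r ≤ i' ∧ j ≤ s ∧ s ≤ j') → q' r s = q r s)

/-- The neutralizable Dyck language DN₁: nonempty pictures over Δ₁ that can
be transformed into the all-N picture by neutralization steps. -/
def DN (m n : ℕ) (p : ℕ → ℕ → Del) : Prop :=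
  1 ≤ m ∧ 1 ≤ n ∧
    ∃ q : ℕ → ℕ → DelN,
      Relation.ReflTransGen (nstep m n) (fun r s => embed (p r s)) q ∧
      ∀ r < m, ∀ s < n, q r s = DelN.N

/-- `(r, s)` is a corner of the rectangle `R = (i, j, i', j')`. -/
def cornerOf (R : ℕ × ℕ × ℕ × ℕ) (r s : ℕ) : Prop :=
  (r = R.1 ∨ r = R.2.2.1) ∧ (s = R.2.1 ∨ s = R.2.2.2)

/-- `(r, s)` lies inside the bounding box of rectangle `R` or on its sides. -/
def inBox (R : ℕ × ℕ × ℕ × ℕ) (r s : ℕ) : Prop :=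
  R.1 ≤ r ∧ r ≤ R.2.2.1 ∧ R.2.1 ≤ s ∧ s ≤ R.2.2.2

/-- `R = (i, j, i', j')` is a rectangle (length-4 circuit) of the matching
graph of picture `p`: its four sides are row and column matching edges. -/
def IsRect (m n : ℕ) (p : ℕ → ℕ → Del) (R : ℕ × ℕ × ℕ × ℕ) : Prop :=
  R.1 < R.2.2.1 ∧ R.2.1 < R.2.2.2 ∧ R.2.2.1 < m ∧ R.2.2.2 < n ∧
  rowMatchW (row p n R.1) R.2.1 R.2.2.2 ∧
  rowMatchW (row p n R.2.2.1) R.2.1 R.2.2.2 ∧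
  colMatchW (col p m R.2.1) R.1 R.2.2.1 ∧
  colMatchW (col p m R.2.2.2) R.1 R.2.2.1

/-- The quaternate Dyck language DQ₁: DC₁ pictures all of whose matching
circuits have length 4, i.e. each cell is a corner of a rectangle. -/
def DQ (m n : ℕ) (p : ℕ → ℕ → Del) : Prop :=
  DC m n p ∧
    ∀ r < m, ∀ s < n, ∃ R, IsRect m n p R ∧ cornerOf R r s

/-- Rectangle `α` has priority over rectangle `β` (α must be neutralized
before β): some corner of `α` falls inside `β`'s bounding box or on its
sides. -/
def prio (m n : ℕ) (p : ℕ → ℕ → Del) (α β : ℕ × ℕ × ℕ × ℕ) : Prop :=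
  IsRect m n p α ∧ IsRect m n p β ∧ α ≠ β ∧
    ∃ r s, cornerOf α r s ∧ inBox β r s

/-- The precedence relation ≺: transitive closure of priority. -/
def prec (m n : ℕ) (p : ℕ → ℕ → Del) : (ℕ × ℕ × ℕ × ℕ) → (ℕ × ℕ × ℕ × ℕ) → Prop :=
  Relation.TransGen (prio m n p)

namespace DyckAux

def fR : Del → ℤ | Del.a => 1 | Del.b => -1 | Del.c => 1 | Del.d => -1
def fC : Del → ℤ | Del.a => 1 | Del.b => 1 | Del.c => -1 | Del.d => -1

theorem prefix_cases {X : Type} {u v U V : List X} {x y : X}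
    (h : u ++ v = U ++ [x, y] ++ V) :
    (∃ t, U = u ++ t) ∨ (u = U ++ [x] ∧ v = y :: V) ∨
      (∃ t, u = U ++ [x, y] ++ t ∧ V = t ++ v) := by
  rw [List.append_assoc] at h
  rcases List.append_eq_append_iff.mp h with ⟨a', ha1, ha2⟩ | ⟨c', hc1, hc2⟩
  · exact Or.inl ⟨a', ha1⟩
  · match c', hc2 with
    | [], hc2 =>
      exact Or.inl ⟨[], by simpa using hc1.symm⟩
    | [z], hc2 =>
      simp only [List.cons_append, List.nil_append, List.cons.injEq] at hc2
      exact Or.inr (Or.inl ⟨by rw [hc1, hc2.1], hc2.2.symm⟩)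
    | z1 :: z2 :: t, hc2 =>
      simp only [List.cons_append, List.nil_append, List.cons.injEq] at hc2
      refine Or.inr (Or.inr ⟨t, ?_, hc2.2.2⟩)
      rw [hc1, ← hc2.1, ← hc2.2.1]; simp

section Abstract

variable {stp : List Del → List Del → Prop} {f : Del → ℤ}

theorem abs_sum
    (hstp : ∀ {w w'}, stp w w' → ∃ u v x y, w = u ++ [x, y] ++ v ∧ w' = u ++ v ∧ f x = 1 ∧ f y = -1)
    {w : List Del} (h : Relation.ReflTransGen stp w []) : (w.map f).sum = 0 := by
  induction h using Relation.ReflTransGen.head_induction_on with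
  | refl => simp
  | head hs _ ih =>
    obtain ⟨u, v, x, y, hw, hw', hx, hy⟩ := hstp hs
    subst hw hw'
    simp only [List.map_append, List.sum_append, List.map_cons, List.sum_cons] at ih ⊢
    simp [hx, hy]; linarith [ih]

theorem abs_prefix
    (hstp : ∀ {w w'}, stp w w' → ∃ u v x y, w = u ++ [x, y] ++ v ∧ w' = u ++ v ∧ f x = 1 ∧ f y = -1)
    {w : List Del} (h : Relation.ReflTransGen stp w []) :
    ∀ u v : List Del, w = u ++ v → 0 ≤ (u.map f).sum := by
  induction h using Relation.ReflTransGen.head_induction_on with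
  | refl =>
    intro u v huv
    rw [List.nil_eq, List.append_eq_nil_iff] at huv
    simp [huv.1]
  | head hs _ ih =>
    intro u v huv
    obtain ⟨U, V, x, y, hw, hw', hx, hy⟩ := hstp hs
    subst hw'
    rcases prefix_cases (huv.symm.trans hw) with ⟨t, ht⟩ | ⟨hu, hv⟩ | ⟨t, hu, hV⟩
    · exact ih u (t ++ V) (by rw [ht]; simp)
    · have h0 : 0 ≤ (U.map f).sum := ih U V rfl
      rw [hu]; simp [hx]; linarith
    · have h0 : 0 ≤ ((U ++ t).map f).sum := ih (U ++ t) v (by rw [hV]; simp)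
      rw [hu]
      simp only [List.map_append, List.sum_append, List.map_cons, List.sum_cons,
        List.map_nil, List.sum_nil] at h0 ⊢
      simp [hx, hy]; linarith

end Abstract

theorem rowStep_spec : ∀ {w w'}, rowStep w w' →
    ∃ u v x y, w = u ++ [x, y] ++ v ∧ w' = u ++ v ∧ fR x = 1 ∧ fR y = -1 := by
  rintro w w' ⟨u, v, h | h, hw'⟩
  · exact ⟨u, v, Del.a, Del.b, h, hw', rfl, rfl⟩
  · exact ⟨u, v, Del.c, Del.d, h, hw', rfl, rfl⟩

theorem colStep_spec : ∀ {w w'}, colStep w w' →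
    ∃ u v x y, w = u ++ [x, y] ++ v ∧ w' = u ++ v ∧ fC x = 1 ∧ fC y = -1 := by
  rintro w w' ⟨u, v, h | h, hw'⟩
  · exact ⟨u, v, Del.a, Del.c, h, hw', rfl, rfl⟩
  · exact ⟨u, v, Del.b, Del.d, h, hw', rfl, rfl⟩

theorem drow_sum {w : List Del} (h : DRow w) : (w.map fR).sum = 0 :=
  abs_sum (fun hs => rowStep_spec hs) h

theorem drow_prefix {w : List Del} (h : DRow w) :
    ∀ u v : List Del, w = u ++ v → 0 ≤ (u.map fR).sum :=
  abs_prefix (fun hs => rowStep_spec hs) h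

theorem dcol_sum {w : List Del} (h : DCol w) : (w.map fC).sum = 0 :=
  abs_sum (fun hs => colStep_spec hs) h

theorem dcol_prefix {w : List Del} (h : DCol w) :
    ∀ u v : List Del, w = u ++ v → 0 ≤ (u.map fC).sum :=
  abs_prefix (fun hs => colStep_spec hs) h

end DyckAux

section Batch2
open DyckAux

theorem abs_ctx {stp : List Del → List Del → Prop}
    (hc : ∀ {u v : List Del} (x y : List Del), stp u v → stp (x ++ u ++ y) (x ++ v ++ y))
    {w : List Del} (h : Relation.ReflTransGen stp w []) (x y : List Del) :
    Relation.ReflTransGen stp (x ++ w ++ y) (x ++ y) := by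
  induction h using Relation.ReflTransGen.head_induction_on with
  | refl => rw [List.append_nil]
  | head hs _ ih => exact Relation.ReflTransGen.head (hc x y hs) ih

theorem rowStep_ctx {u v : List Del} (x y : List Del) (h : rowStep u v) :
    rowStep (x ++ u ++ y) (x ++ v ++ y) := by
  obtain ⟨U, V, hp, hv⟩ := h
  refine ⟨x ++ U, V ++ y, ?_, by rw [hv]; simp⟩
  rcases hp with hp | hp
  · left; rw [hp]; simp
  · right; rw [hp]; simp

theorem colStep_ctx {u v : List Del} (x y : List Del) (h : colStep u v) :
    colStep (x ++ u ++ y) (x ++ v ++ y) := by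
  obtain ⟨U, V, hp, hv⟩ := h
  refine ⟨x ++ U, V ++ y, ?_, by rw [hv]; simp⟩
  rcases hp with hp | hp
  · left; rw [hp]; simp
  · right; rw [hp]; simp

theorem drow_append {u v : List Del} (hu : DRow u) (hv : DRow v) : DRow (u ++ v) := by
  have h1 := abs_ctx (fun x y hs => rowStep_ctx x y hs) hv u []
  simp only [List.append_nil] at h1
  exact h1.trans hu

theorem dcol_append {u v : List Del} (hu : DCol u) (hv : DCol v) : DCol (u ++ v) := by
  have h1 := abs_ctx (fun x y hs => colStep_ctx x y hs) hv u []
  simp only [List.append_nil] at h1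
  exact h1.trans hu

theorem drow_wrap {M : List Del} (hM : DRow M) {x y : Del}
    (hxy : (x = Del.a ∧ y = Del.b) ∨ (x = Del.c ∧ y = Del.d)) :
    DRow (x :: (M ++ [y])) := by
  have h1 := abs_ctx (fun a b hs => rowStep_ctx a b hs) hM [x] [y]
  have h2 : rowStep ([x] ++ [y]) [] := by
    refine ⟨[], [], ?_, rfl⟩
    rcases hxy with ⟨hx, hy⟩ | ⟨hx, hy⟩
    · left; rw [hx, hy]; rfl
    · right; rw [hx, hy]; rfl
  have h3 : DRow ([x] ++ M ++ [y]) := h1.trans (Relation.ReflTransGen.single h2)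
  simpa using h3

theorem dcol_wrap {M : List Del} (hM : DCol M) {x y : Del}
    (hxy : (x = Del.a ∧ y = Del.c) ∨ (x = Del.b ∧ y = Del.d)) :
    DCol (x :: (M ++ [y])) := by
  have h1 := abs_ctx (fun a b hs => colStep_ctx a b hs) hM [x] [y]
  have h2 : colStep ([x] ++ [y]) [] := by
    refine ⟨[], [], ?_, rfl⟩
    rcases hxy with ⟨hx, hy⟩ | ⟨hx, hy⟩
    · left; rw [hx, hy]; rfl
    · right; rw [hx, hy]; rfl
  have h3 : DCol ([x] ++ M ++ [y]) := h1.trans (Relation.ReflTransGen.single h2)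
  simpa using h3

/-- Abstract uniqueness (right endpoint), via prefix sums. -/
theorem matchW_unique_lt_abs {D : List Del → Prop} {f : Del → ℤ}
    (hsum : ∀ {w : List Del}, D w → (w.map f).sum = 0)
    (hpre : ∀ {w : List Del}, D w → ∀ u v : List Del, w = u ++ v → 0 ≤ (u.map f).sum)
    {w : List Del} {j j1 j2 : ℕ} (hj1 : j < j1) (hlt : j1 < j2)
    {y : Del} (hy1 : w[j1]? = some y) (hy2 : f y = -1)
    (hd1 : D ((w.drop (j+1)).take (j1 - (j+1))))
    (hd2 : D ((w.drop (j+1)).take (j2 - (j+1)))) : False := by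
  set M2 := (w.drop (j+1)).take (j2 - (j+1)) with hM2
  set k := j1 - (j+1) with hk
  have hk2 : k < j2 - (j+1) := by omega
  have htake : M2.take k = (w.drop (j+1)).take k := by
    rw [hM2, List.take_take]; congr 1; omega
  have hget : M2[k]? = some y := by
    rw [hM2, List.getElem?_take_of_lt hk2, List.getElem?_drop]
    rw [← hy1]; congr 1; omega
  have hpre2 := hpre hd2 (M2.take (k+1)) (M2.drop (k+1)) (List.take_append_drop _ _).symm
  have hts : M2.take (k+1) = M2.take k ++ [y] := by
    rw [List.take_succ, hget]; rfl
  have hsum1 : ((M2.take k).map f).sum = 0 := by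
    rw [htake]; exact hsum hd1
  rw [hts] at hpre2
  simp only [List.map_append, List.sum_append, List.map_cons, List.map_nil,
    List.sum_cons, List.sum_nil] at hpre2
  rw [hsum1, hy2] at hpre2; omega

/-- Abstract uniqueness (left endpoint), via suffix sums. -/
theorem matchW_unique_left_lt_abs {D : List Del → Prop} {f : Del → ℤ}
    (hsum : ∀ {w : List Del}, D w → (w.map f).sum = 0)
    (hpre : ∀ {w : List Del}, D w → ∀ u v : List Del, w = u ++ v → 0 ≤ (u.map f).sum)
    {w : List Del} {j1 j2 j' : ℕ} (hj2 : j2 < j') (hlt : j1 < j2) (hj' : j' < w.length)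
    {x : Del} (hx1 : w[j2]? = some x) (hx2 : f x = 1)
    (hd1 : D ((w.drop (j1+1)).take (j' - (j1+1))))
    (hd2 : D ((w.drop (j2+1)).take (j' - (j2+1)))) : False := by
  set M1 := (w.drop (j1+1)).take (j' - (j1+1)) with hM1
  set M2 := (w.drop (j2+1)).take (j' - (j2+1)) with hM2
  set t := j2 - (j1+1) with ht
  have hj2len : j2 < w.length := lt_trans hj2 hj'
  have hgetx : w[j2] = x := by
    have h0 := List.getElem?_eq_getElem hj2len
    rw [h0] at hx1
    exact Option.some_injective _ hx1
  have hdropsplit : M1.drop t = (w.drop j2).take (j' - j2) := by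
    rw [hM1, List.drop_take]
    have h1 : (w.drop (j1+1)).drop t = w.drop j2 := by
      rw [List.drop_drop]; congr 1; omega
    rw [h1]; congr 1; omega
  have hdrop2 : w.drop j2 = x :: w.drop (j2+1) := by
    rw [List.drop_eq_getElem_cons hj2len, hgetx]
  have hM2eq : M1.drop t = x :: M2 := by
    rw [hdropsplit, hdrop2, show j' - j2 = (j' - (j2+1)) + 1 by omega,
      List.take_succ_cons, hM2]
  have hsumM1 : (M1.map f).sum = 0 := hsum hd1
  have hsumM2 : (M2.map f).sum = 0 := hsum hd2
  have hpre1 := hpre hd1 (M1.take t) (M1.drop t) (List.take_append_drop _ _).symm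
  have hsplit : (M1.map f).sum = ((M1.take t).map f).sum + ((M1.drop t).map f).sum := by
    conv_lhs => rw [← List.take_append_drop t M1]
    simp [List.map_append]
  rw [hM2eq] at hsplit
  simp only [List.map_cons, List.sum_cons] at hsplit
  rw [hsumM1, hsumM2, hx2] at hsplit
  omega

theorem rowMatchW_unique_right {w : List Del} {j j1 j2 : ℕ}
    (h1 : rowMatchW w j j1) (h2 : rowMatchW w j j2) : j1 = j2 := by
  obtain ⟨ha1, hb1, hl1, hd1⟩ := h1
  obtain ⟨ha2, hb2, hl2, hd2⟩ := h2
  have key : ∀ i1 i2 : ℕ, i1 < i2 → j < i1 →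
      (w[i1]? = some Del.b ∨ w[i1]? = some Del.d) →
      DRow ((w.drop (j+1)).take (i1 - (j+1))) →
      DRow ((w.drop (j+1)).take (i2 - (j+1))) → False := by
    intro i1 i2 hlt hji hy hdd1 hdd2
    rcases hy with hy | hy
    · exact matchW_unique_lt_abs (fun hh => drow_sum hh) (fun hh => drow_prefix hh)
        hji hlt hy rfl hdd1 hdd2
    · exact matchW_unique_lt_abs (fun hh => drow_sum hh) (fun hh => drow_prefix hh)
        hji hlt hy rfl hdd1 hdd2
  have hy1 : w[j1]? = some Del.b ∨ w[j1]? = some Del.d :=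
    hl1.elim (fun h => Or.inl h.2) (fun h => Or.inr h.2)
  have hy2 : w[j2]? = some Del.b ∨ w[j2]? = some Del.d :=
    hl2.elim (fun h => Or.inl h.2) (fun h => Or.inr h.2)
  rcases Nat.lt_trichotomy j1 j2 with h | h | h
  · exact absurd h (fun hh => key j1 j2 hh ha1 hy1 hd1 hd2)
  · exact h
  · exact absurd h (fun hh => key j2 j1 hh ha2 hy2 hd2 hd1)

theorem colMatchW_unique_right {w : List Del} {j j1 j2 : ℕ}
    (h1 : colMatchW w j j1) (h2 : colMatchW w j j2) : j1 = j2 := by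
  obtain ⟨ha1, hb1, hl1, hd1⟩ := h1
  obtain ⟨ha2, hb2, hl2, hd2⟩ := h2
  have key : ∀ i1 i2 : ℕ, i1 < i2 → j < i1 →
      (w[i1]? = some Del.c ∨ w[i1]? = some Del.d) →
      DCol ((w.drop (j+1)).take (i1 - (j+1))) →
      DCol ((w.drop (j+1)).take (i2 - (j+1))) → False := by
    intro i1 i2 hlt hji hy hdd1 hdd2
    rcases hy with hy | hy
    · exact matchW_unique_lt_abs (fun hh => dcol_sum hh) (fun hh => dcol_prefix hh)
        hji hlt hy rfl hdd1 hdd2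
    · exact matchW_unique_lt_abs (fun hh => dcol_sum hh) (fun hh => dcol_prefix hh)
        hji hlt hy rfl hdd1 hdd2
  have hy1 : w[j1]? = some Del.c ∨ w[j1]? = some Del.d :=
    hl1.elim (fun h => Or.inl h.2) (fun h => Or.inr h.2)
  have hy2 : w[j2]? = some Del.c ∨ w[j2]? = some Del.d :=
    hl2.elim (fun h => Or.inl h.2) (fun h => Or.inr h.2)
  rcases Nat.lt_trichotomy j1 j2 with h | h | h
  · exact absurd h (fun hh => key j1 j2 hh ha1 hy1 hd1 hd2)
  · exact h
  · exact absurd h (fun hh => key j2 j1 hh ha2 hy2 hd2 hd1)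

theorem rowMatchW_unique_left {w : List Del} {j1 j2 j' : ℕ}
    (h1 : rowMatchW w j1 j') (h2 : rowMatchW w j2 j') : j1 = j2 := by
  obtain ⟨ha1, hb1, hl1, hd1⟩ := h1
  obtain ⟨ha2, hb2, hl2, hd2⟩ := h2
  have key : ∀ i1 i2 : ℕ, i1 < i2 → i2 < j' →
      (w[i2]? = some Del.a ∨ w[i2]? = some Del.c) →
      DRow ((w.drop (i1+1)).take (j' - (i1+1))) →
      DRow ((w.drop (i2+1)).take (j' - (i2+1))) → False := by
    intro i1 i2 hlt hij hx hdd1 hdd2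
    rcases hx with hx | hx
    · exact matchW_unique_left_lt_abs (fun hh => drow_sum hh) (fun hh => drow_prefix hh)
        hij hlt hb1 hx rfl hdd1 hdd2
    · exact matchW_unique_left_lt_abs (fun hh => drow_sum hh) (fun hh => drow_prefix hh)
        hij hlt hb1 hx rfl hdd1 hdd2
  have hx1 : w[j1]? = some Del.a ∨ w[j1]? = some Del.c :=
    hl1.elim (fun h => Or.inl h.1) (fun h => Or.inr h.1)
  have hx2 : w[j2]? = some Del.a ∨ w[j2]? = some Del.c :=
    hl2.elim (fun h => Or.inl h.1) (fun h => Or.inr h.1)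
  rcases Nat.lt_trichotomy j1 j2 with h | h | h
  · exact absurd h (fun hh => key j1 j2 hh ha2 hx2 hd1 hd2)
  · exact h
  · exact absurd h (fun hh => key j2 j1 hh ha1 hx1 hd2 hd1)

theorem colMatchW_unique_left {w : List Del} {j1 j2 j' : ℕ}
    (h1 : colMatchW w j1 j') (h2 : colMatchW w j2 j') : j1 = j2 := by
  obtain ⟨ha1, hb1, hl1, hd1⟩ := h1
  obtain ⟨ha2, hb2, hl2, hd2⟩ := h2
  have key : ∀ i1 i2 : ℕ, i1 < i2 → i2 < j' →
      (w[i2]? = some Del.a ∨ w[i2]? = some Del.b) →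
      DCol ((w.drop (i1+1)).take (j' - (i1+1))) →
      DCol ((w.drop (i2+1)).take (j' - (i2+1))) → False := by
    intro i1 i2 hlt hij hx hdd1 hdd2
    rcases hx with hx | hx
    · exact matchW_unique_left_lt_abs (fun hh => dcol_sum hh) (fun hh => dcol_prefix hh)
        hij hlt hb1 hx rfl hdd1 hdd2
    · exact matchW_unique_left_lt_abs (fun hh => dcol_sum hh) (fun hh => dcol_prefix hh)
        hij hlt hb1 hx rfl hdd1 hdd2
  have hx1 : w[j1]? = some Del.a ∨ w[j1]? = some Del.b :=
    hl1.elim (fun h => Or.inl h.1) (fun h => Or.inr h.1)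
  have hx2 : w[j2]? = some Del.a ∨ w[j2]? = some Del.b :=
    hl2.elim (fun h => Or.inl h.1) (fun h => Or.inr h.1)
  rcases Nat.lt_trichotomy j1 j2 with h | h | h
  · exact absurd h (fun hh => key j1 j2 hh ha2 hx2 hd1 hd2)
  · exact h
  · exact absurd h (fun hh => key j2 j1 hh ha1 hx1 hd2 hd1)

end Batch2

section Batch3
open DyckAux

theorem row_length {p : ℕ → ℕ → Del} {n i : ℕ} : (row p n i).length = n := by simp [row]
theorem col_length {p : ℕ → ℕ → Del} {m j : ℕ} : (col p m j).length = m := by simp [col]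

theorem row_get? {p : ℕ → ℕ → Del} {n i j : ℕ} (hj : j < n) :
    (row p n i)[j]? = some (p i j) := by
  simp [row, hj]

theorem col_get? {p : ℕ → ℕ → Del} {m j i : ℕ} (hi : i < m) :
    (col p m j)[i]? = some (p i j) := by
  simp [col, hi]

theorem rect_letters {m n : ℕ} {p : ℕ → ℕ → Del} {R : ℕ × ℕ × ℕ × ℕ}
    (hR : IsRect m n p R) :
    p R.1 R.2.1 = Del.a ∧ p R.1 R.2.2.2 = Del.b ∧
      p R.2.2.1 R.2.1 = Del.c ∧ p R.2.2.1 R.2.2.2 = Del.d := by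
  obtain ⟨hii, hjj, him, hjn, hr1, hr2, hc1, hc2⟩ := hR
  have hj1n : R.2.1 < n := lt_trans hjj hjn
  have hi1m : R.1 < m := lt_trans hii him
  obtain ⟨-, -, hL1, -⟩ := hr1
  obtain ⟨-, -, hL2, -⟩ := hr2
  obtain ⟨-, -, hL3, -⟩ := hc1
  obtain ⟨-, -, hL4, -⟩ := hc2
  rw [row_get? hj1n, row_get? hjn] at hL1 hL2
  rw [col_get? hi1m, col_get? him] at hL3 hL4
  rcases hL1 with ⟨e1, e2⟩ | ⟨e1, e2⟩ <;> rcases hL2 with ⟨e3, e4⟩ | ⟨e3, e4⟩ <;>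
    rcases hL3 with ⟨e5, e6⟩ | ⟨e5, e6⟩ <;> rcases hL4 with ⟨e7, e8⟩ | ⟨e7, e8⟩ <;>
      simp_all

theorem corner_role {m n : ℕ} {p : ℕ → ℕ → Del} {R : ℕ × ℕ × ℕ × ℕ} {r s : ℕ}
    (hR : IsRect m n p R) (hc : cornerOf R r s) :
    (p r s = Del.a ∧ r = R.1 ∧ s = R.2.1) ∨ (p r s = Del.b ∧ r = R.1 ∧ s = R.2.2.2) ∨
    (p r s = Del.c ∧ r = R.2.2.1 ∧ s = R.2.1) ∨
    (p r s = Del.d ∧ r = R.2.2.1 ∧ s = R.2.2.2) := by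
  obtain ⟨hc1, hc2⟩ := hc
  obtain ⟨la, lb, lc, ld⟩ := rect_letters hR
  rcases hc1 with h | h <;> rcases hc2 with h' | h' <;> subst h <;> subst h' <;> simp_all

theorem corner_inBox {R : ℕ × ℕ × ℕ × ℕ} {r s : ℕ}
    (hR1 : R.1 ≤ R.2.2.1) (hR2 : R.2.1 ≤ R.2.2.2) (hc : cornerOf R r s) : inBox R r s := by
  obtain ⟨h1, h2⟩ := hc
  rcases h1 with h | h <;> rcases h2 with h' | h' <;> subst h <;> subst h' <;>
    exact ⟨by omega, by omega, by omega, by omega⟩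

theorem rect_unique {m n : ℕ} {p : ℕ → ℕ → Del} {R1 R2 : ℕ × ℕ × ℕ × ℕ} {r s : ℕ}
    (h1 : IsRect m n p R1) (h2 : IsRect m n p R2)
    (hc1 : cornerOf R1 r s) (hc2 : cornerOf R2 r s) : R1 = R2 := by
  obtain ⟨i1, j1, i1', j1'⟩ := R1
  obtain ⟨i2, j2, i2', j2'⟩ := R2
  have role1 := corner_role h1 hc1
  have role2 := corner_role h2 hc2
  obtain ⟨-, -, -, -, hr1t, hr1b, hc1l, hc1r⟩ := h1
  obtain ⟨-, -, -, -, hr2t, hr2b, hc2l, hc2r⟩ := h2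
  simp only [Prod.mk.injEq]
  rcases role1 with ⟨hl, hr, hs⟩ | ⟨hl, hr, hs⟩ | ⟨hl, hr, hs⟩ | ⟨hl, hr, hs⟩ <;>
    rcases role2 with ⟨hl2, hr2, hs2⟩ | ⟨hl2, hr2, hs2⟩ | ⟨hl2, hr2, hs2⟩ | ⟨hl2, hr2, hs2⟩ <;>
      simp only at hl hl2 hr hs hr2 hs2 <;>
      first
      | (rw [hl] at hl2; exact absurd hl2 (by decide))
      | skip
  · -- both a: top-left
    have hi : i1 = i2 := hr.symm.trans hr2
    have hj : j1 = j2 := hs.symm.trans hs2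
    subst hi hj hr hs
    exact ⟨rfl, rfl, colMatchW_unique_right hc1l hc2l, rowMatchW_unique_right hr1t hr2t⟩
  · -- both b: top-right
    have hi : i1 = i2 := hr.symm.trans hr2
    have hj : j1' = j2' := hs.symm.trans hs2
    subst hi hj hr hs
    exact ⟨rfl, rowMatchW_unique_left hr1t hr2t, colMatchW_unique_right hc1r hc2r, rfl⟩
  · -- both c: bottom-left
    have hi : i1' = i2' := hr.symm.trans hr2
    have hj : j1 = j2 := hs.symm.trans hs2
    subst hi hj hr hs
    exact ⟨colMatchW_unique_left hc1l hc2l, rfl, rfl, rowMatchW_unique_right hr1b hr2b⟩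
  · -- both d: bottom-right
    have hi : i1' = i2' := hr.symm.trans hr2
    have hj : j1' = j2' := hs.symm.trans hs2
    subst hi hj hr hs
    exact ⟨colMatchW_unique_left hc1r hc2r, rowMatchW_unique_left hr1b hr2b, rfl, rfl⟩

end Batch3

section Batch4
open DyckAux

/-- A maximal gap of `N`s in a line. -/
def gapL (Q : ℕ → DelN) (len a b : ℕ) : Prop :=
  a ≤ b ∧ b ≤ len ∧ (∀ s, a ≤ s → s < b → Q s = DelN.N) ∧
    (a = 0 ∨ Q (a-1) ≠ DelN.N) ∧ (b = len ∨ Q b ≠ DelN.N)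

def Jinv (p : ℕ → ℕ → Del) (q : ℕ → ℕ → DelN) : Prop :=
  ∀ r s, q r s = embed (p r s) ∨ q r s = DelN.N

def Kinv (m n : ℕ) (p : ℕ → ℕ → Del) (q : ℕ → ℕ → DelN) : Prop :=
  (∀ i, i < m → ∀ a b, gapL (fun s => q i s) n a b →
      DRow (((row p n i).drop a).take (b - a))) ∧
  (∀ j, j < n → ∀ a b, gapL (fun r => q r j) m a b →
      DCol (((col p m j).drop a).take (b - a)))

theorem embed_injective : Function.Injective embed := by
  intro x y h; cases x <;> cases y <;> simp [embed] at h ⊢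

theorem embed_ne_N (x : Del) : embed x ≠ DelN.N := by cases x <;> simp [embed]

theorem take_drop_split {X : Type} (l : List X) {a j b : ℕ} (ha : a ≤ j) (hjb : j < b)
    (hb : b ≤ l.length) :
    (l.drop a).take (b - a) =
      (l.drop a).take (j - a) ++ (l[j]'(by omega)) :: (l.drop (j+1)).take (b - (j+1)) := by
  have hjl : j < l.length := by omega
  have h1 : b - a = (j - a) + (b - j) := by omega
  rw [h1, List.take_add]
  congr 1
  have h2 : (l.drop a).drop (j - a) = l.drop j := by
    rw [List.drop_drop]; congr 1; omega
  rw [h2, List.drop_eq_getElem_cons hjl,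
    show b - j = (b - (j+1)) + 1 by omega, List.take_succ_cons]

theorem gapL_congr {Q Q' : ℕ → DelN} {len a b : ℕ} (h : ∀ s, Q' s = Q s)
    (hg : gapL Q' len a b) : gapL Q len a b := by
  obtain ⟨h1, h2, h3, h4, h5⟩ := hg
  exact ⟨h1, h2, fun s hs1 hs2 => (h s).symm.trans (h3 s hs1 hs2),
    h4.imp id (fun hh => by rw [← h (a-1)]; exact hh),
    h5.imp id (fun hh => by rw [← h b]; exact hh)⟩

/-- Key lemma: merging the gaps around a removed matched pair. -/
theorem gap_merge {D : List Del → Prop} {w : List Del} {Q Q' : ℕ → DelN} {len u v : ℕ}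
    (hlen : w.length = len) (huv : u < v) (hvlen : v < len)
    (hD1 : ∀ a b, gapL Q len a b → D ((w.drop a).take (b - a)))
    (happend : ∀ {l1 l2 : List Del}, D l1 → D l2 → D (l1 ++ l2))
    (hwrap : ∀ {M : List Del}, D M →
      D ((w[u]'(by omega)) :: (M ++ [w[v]'(by omega)])))
    (hQ'in : ∀ s, u ≤ s → s ≤ v → Q' s = DelN.N)
    (hQ'out : ∀ s, ¬(u ≤ s ∧ s ≤ v) → Q' s = Q s)
    (hQu : Q u ≠ DelN.N) (hQv : Q v ≠ DelN.N)
    (hQmid : ∀ s, u < s → s < v → Q s = DelN.N) :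
    ∀ a b, gapL Q' len a b → D ((w.drop a).take (b - a)) := by
  have hback : ∀ x, Q' x ≠ DelN.N → Q x ≠ DelN.N := by
    intro x hx
    by_cases hb : u ≤ x ∧ x ≤ v
    · exact absurd (hQ'in x hb.1 hb.2) hx
    · rw [← hQ'out x hb]; exact hx
  intro a b hg
  obtain ⟨hab, hblen, hN, hbl, hbr⟩ := hg
  by_cases hsep : b ≤ u ∨ v < a
  · apply hD1 a b
    refine ⟨hab, hblen, ?_, ?_, ?_⟩
    · intro s hs1 hs2
      rw [← hQ'out s (by rcases hsep with h | h <;> omega)]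
      exact hN s hs1 hs2
    · exact hbl.imp id (fun hh => hback _ hh)
    · exact hbr.imp id (fun hh => hback _ hh)
  · push_neg at hsep
    obtain ⟨hub, hav⟩ := hsep
    have hau : a ≤ u := by
      by_contra hc
      push_neg at hc
      have h1 : Q' (a-1) = DelN.N := hQ'in (a-1) (by omega) (by omega)
      rcases hbl with h | h
      · omega
      · exact h h1
    have hvb : v < b := by
      by_contra hc
      push_neg at hc
      have h1 : Q' b = DelN.N := hQ'in b (by omega) (by omega)
      rcases hbr with h | h
      · omega
      · exact h h1
    have hbw : b ≤ w.length := by omega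
    have hgapL : gapL Q len a u := by
      refine ⟨hau, by omega, ?_, ?_, Or.inr hQu⟩
      · intro s hs1 hs2
        rw [← hQ'out s (by omega)]
        exact hN s hs1 (by omega)
      · rcases hbl with h | h
        · exact Or.inl h
        · refine Or.inr ?_
          by_cases hx : u ≤ a-1 ∧ a-1 ≤ v
          · exact absurd (hQ'in _ hx.1 hx.2) h
          · rw [← hQ'out _ hx]; exact h
    have hgapM : gapL Q len (u+1) v := by
      refine ⟨by omega, by omega, ?_, Or.inr (by simpa using hQu), Or.inr hQv⟩
      intro s hs1 hs2; exact hQmid s (by omega) hs2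
    have hgapR : gapL Q len (v+1) b := by
      refine ⟨by omega, hblen, ?_, Or.inr (by simpa using hQv), ?_⟩
      · intro s hs1 hs2
        rw [← hQ'out s (by omega)]
        exact hN s (by omega) hs2
      · rcases hbr with h | h
        · exact Or.inl h
        · exact Or.inr (by rw [← hQ'out b (by omega)]; exact h)
    have hL := hD1 _ _ hgapL
    have hM := hD1 _ _ hgapM
    have hR := hD1 _ _ hgapR
    have hs1 := take_drop_split w hau (lt_trans huv hvb) hbw
    have hs2 := take_drop_split w (Nat.succ_le_of_lt huv) hvb hbw
    rw [hs1, hs2]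
    have hfin := happend (happend (hwrap hM) hR) hL
    have hfin2 := happend hL (happend (hwrap hM) hR)
    simpa [List.append_assoc, List.cons_append] using hfin2
end Batch4

section Batch5
open DyckAux

theorem row_getElem {p : ℕ → ℕ → Del} {n i j : ℕ} (h : j < (row p n i).length) :
    (row p n i)[j] = p i j := by
  simp [row] at h ⊢

theorem col_getElem {p : ℕ → ℕ → Del} {m j i : ℕ} (h : i < (col p m j).length) :
    (col p m j)[i] = p i j := by
  simp [col] at h ⊢

theorem Jletter {p : ℕ → ℕ → Del} {q : ℕ → ℕ → DelN} (hJ : Jinv p q) {r s : ℕ} {x : Del}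
    (h : q r s = embed x) : p r s = x := by
  rcases hJ r s with h' | h'
  · exact embed_injective (h'.symm.trans h)
  · rw [h'] at h; exact absurd h.symm (embed_ne_N x)

theorem ne_N_of_eq {q : ℕ → ℕ → DelN} {r s : ℕ} {x : DelN} (h : q r s = x)
    (hx : x ≠ DelN.N) : q r s ≠ DelN.N := h ▸ hx

theorem Jinv_step {m n : ℕ} {p : ℕ → ℕ → Del} {q q' : ℕ → ℕ → DelN}
    (hJ : Jinv p q) (hs : nstep m n q q') : Jinv p q' := by
  obtain ⟨i, j, i', j', hii, hjj, him, hjn, qa, qb, qc, qd, hdN, hin, hout⟩ := hs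
  intro r s
  by_cases hb : i ≤ r ∧ r ≤ i' ∧ j ≤ s ∧ s ≤ j'
  · right; exact hin r s hb
  · rw [hout r s hb]; exact hJ r s

theorem Kinv_step {m n : ℕ} {p : ℕ → ℕ → Del} {q q' : ℕ → ℕ → DelN}
    (hJ : Jinv p q) (hK : Kinv m n p q) (hs : nstep m n q q') : Kinv m n p q' := by
  obtain ⟨i, j, i', j', hii, hjj, him, hjn, qa, qb, qc, qd, hdN, hin, hout⟩ := hs
  have him0 : i < m := lt_trans hii him
  have hjn0 : j < n := lt_trans hjj hjn
  have hpa : p i j = Del.a := Jletter hJ qa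
  have hpb : p i j' = Del.b := Jletter hJ qb
  have hpc : p i' j = Del.c := Jletter hJ qc
  have hpd : p i' j' = Del.d := Jletter hJ qd
  constructor
  · -- rows
    intro i₀ hi₀ a b hg
    by_cases hr1 : i₀ = i
    · subst hr1
      refine gap_merge (w := row p n i₀) (Q := fun s => q i₀ s) (len := n)
        (u := j) (v := j') row_length hjj hjn (hK.1 i₀ hi₀)
        (fun h1 h2 => drow_append h1 h2) ?_ ?_ ?_ ?_ ?_ ?_ a b hg
      · intro M hM
        rw [row_getElem, row_getElem, hpa, hpb]
        exact drow_wrap hM (Or.inl ⟨rfl, rfl⟩)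
      · intro s h1 h2; exact hin i₀ s ⟨le_refl _, hii.le, h1, h2⟩
      · intro s hsb; exact hout i₀ s (fun hc => hsb ⟨hc.2.2.1, hc.2.2.2⟩)
      · exact ne_N_of_eq qa (by simp)
      · exact ne_N_of_eq qb (by simp)
      · intro s h1 h2
        exact hdN i₀ s (le_refl _) hii.le (by omega) (by omega)
          (by rintro ⟨-, h | h⟩ <;> omega)
    · by_cases hr2 : i₀ = i'
      · subst hr2
        refine gap_merge (w := row p n i₀) (Q := fun s => q i₀ s) (len := n)
          (u := j) (v := j') row_length hjj hjn (hK.1 i₀ hi₀)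
          (fun h1 h2 => drow_append h1 h2) ?_ ?_ ?_ ?_ ?_ ?_ a b hg
        · intro M hM
          rw [row_getElem, row_getElem, hpc, hpd]
          exact drow_wrap hM (Or.inr ⟨rfl, rfl⟩)
        · intro s h1 h2; exact hin i₀ s ⟨hii.le, le_refl _, h1, h2⟩
        · intro s hsb; exact hout i₀ s (fun hc => hsb ⟨hc.2.2.1, hc.2.2.2⟩)
        · exact ne_N_of_eq qc (by simp)
        · exact ne_N_of_eq qd (by simp)
        · intro s h1 h2
          exact hdN i₀ s hii.le (le_refl _) (by omega) (by omega)
            (by rintro ⟨-, h | h⟩ <;> omega)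
      · -- unchanged row
        apply hK.1 i₀ hi₀
        refine gapL_congr ?_ hg
        intro s
        by_cases hb : i ≤ i₀ ∧ i₀ ≤ i' ∧ j ≤ s ∧ s ≤ j'
        · rw [hin i₀ s hb, hdN i₀ s hb.1 hb.2.1 hb.2.2.1 hb.2.2.2
            (fun hc => hc.1.elim hr1 hr2)]
        · exact hout i₀ s hb
  · -- columns
    intro j₀ hj₀ a b hg
    by_cases hc1 : j₀ = j
    · subst hc1
      refine gap_merge (w := col p m j₀) (Q := fun r => q r j₀) (len := m)
        (u := i) (v := i') col_length hii him (hK.2 j₀ hj₀)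
        (fun h1 h2 => dcol_append h1 h2) ?_ ?_ ?_ ?_ ?_ ?_ a b hg
      · intro M hM
        rw [col_getElem, col_getElem, hpa, hpc]
        exact dcol_wrap hM (Or.inl ⟨rfl, rfl⟩)
      · intro r h1 h2; exact hin r j₀ ⟨h1, h2, le_refl _, hjj.le⟩
      · intro r hsb; exact hout r j₀ (fun hc => hsb ⟨hc.1, hc.2.1⟩)
      · exact ne_N_of_eq qa (by simp)
      · exact ne_N_of_eq qc (by simp)
      · intro r h1 h2
        exact hdN r j₀ (by omega) (by omega) (le_refl _) hjj.le
          (by rintro ⟨h | h, -⟩ <;> omega)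
    · by_cases hc2 : j₀ = j'
      · subst hc2
        refine gap_merge (w := col p m j₀) (Q := fun r => q r j₀) (len := m)
          (u := i) (v := i') col_length hii him (hK.2 j₀ hj₀)
          (fun h1 h2 => dcol_append h1 h2) ?_ ?_ ?_ ?_ ?_ ?_ a b hg
        · intro M hM
          rw [col_getElem, col_getElem, hpb, hpd]
          exact dcol_wrap hM (Or.inr ⟨rfl, rfl⟩)
        · intro r h1 h2; exact hin r j₀ ⟨h1, h2, hjj.le, le_refl _⟩
        · intro r hsb; exact hout r j₀ (fun hc => hsb ⟨hc.1, hc.2.1⟩)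
        · exact ne_N_of_eq qb (by simp)
        · exact ne_N_of_eq qd (by simp)
        · intro r h1 h2
          exact hdN r j₀ (by omega) (by omega) hjj.le (le_refl _)
            (by rintro ⟨h | h, -⟩ <;> omega)
      · -- unchanged column
        apply hK.2 j₀ hj₀
        refine gapL_congr ?_ hg
        intro r
        by_cases hb : i ≤ r ∧ r ≤ i' ∧ j ≤ j₀ ∧ j₀ ≤ j'
        · rw [hin r j₀ hb, hdN r j₀ hb.1 hb.2.1 hb.2.2.1 hb.2.2.2
            (fun hc => hc.2.elim hc1 hc2)]
        · exact hout r j₀ hb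

/-- Every neutralization step from a good state collapses a genuine rectangle. -/
theorem nstep_box {m n : ℕ} {p : ℕ → ℕ → Del} {q q' : ℕ → ℕ → DelN}
    (hJ : Jinv p q) (hK : Kinv m n p q) (hs : nstep m n q q') :
    ∃ R : ℕ × ℕ × ℕ × ℕ, IsRect m n p R ∧
      (∀ r s, ¬ inBox R r s → q' r s = q r s) ∧
      (∀ r s, inBox R r s → q' r s = DelN.N) ∧
      (∀ r s, inBox R r s → ¬ cornerOf R r s → q r s = DelN.N) ∧
      (∀ r s, cornerOf R r s → q r s ≠ DelN.N) := by
  obtain ⟨i, j, i', j', hii, hjj, him, hjn, qa, qb, qc, qd, hdN, hin, hout⟩ := hs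
  have him0 : i < m := lt_trans hii him
  have hjn0 : j < n := lt_trans hjj hjn
  have hpa : p i j = Del.a := Jletter hJ qa
  have hpb : p i j' = Del.b := Jletter hJ qb
  have hpc : p i' j = Del.c := Jletter hJ qc
  have hpd : p i' j' = Del.d := Jletter hJ qd
  refine ⟨(i, j, i', j'), ⟨hii, hjj, him, hjn, ?_, ?_, ?_, ?_⟩, ?_, ?_, ?_, ?_⟩
  · refine ⟨hjj, by rw [row_length]; exact hjn, ?_, ?_⟩
    · left; rw [row_get? hjn0, row_get? hjn, hpa, hpb]; exact ⟨rfl, rfl⟩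
    · apply hK.1 i him0 (j+1) j'
      refine ⟨by omega, by omega, ?_, Or.inr (ne_N_of_eq qa (by simp)), Or.inr (ne_N_of_eq qb (by simp))⟩
      intro s h1 h2
      exact hdN i s (le_refl _) hii.le (by omega) (by omega)
        (by rintro ⟨-, h | h⟩ <;> omega)
  · refine ⟨hjj, by rw [row_length]; exact hjn, ?_, ?_⟩
    · right; rw [row_get? hjn0, row_get? hjn, hpc, hpd]; exact ⟨rfl, rfl⟩
    · apply hK.1 i' him (j+1) j'
      refine ⟨by omega, by omega, ?_, Or.inr (ne_N_of_eq qc (by simp)), Or.inr (ne_N_of_eq qd (by simp))⟩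
      intro s h1 h2
      exact hdN i' s hii.le (le_refl _) (by omega) (by omega)
        (by rintro ⟨-, h | h⟩ <;> omega)
  · refine ⟨hii, by rw [col_length]; exact him, ?_, ?_⟩
    · left; rw [col_get? him0, col_get? him, hpa, hpc]; exact ⟨rfl, rfl⟩
    · apply hK.2 j hjn0 (i+1) i'
      refine ⟨by omega, by omega, ?_, Or.inr (ne_N_of_eq qa (by simp)), Or.inr (ne_N_of_eq qc (by simp))⟩
      intro r h1 h2
      exact hdN r j (by omega) (by omega) (le_refl _) hjj.le
        (by rintro ⟨h | h, -⟩ <;> omega)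
  · refine ⟨hii, by rw [col_length]; exact him, ?_, ?_⟩
    · right; rw [col_get? him0, col_get? him, hpb, hpd]; exact ⟨rfl, rfl⟩
    · apply hK.2 j' hjn (i+1) i'
      refine ⟨by omega, by omega, ?_, Or.inr (ne_N_of_eq qb (by simp)), Or.inr (ne_N_of_eq qd (by simp))⟩
      intro r h1 h2
      exact hdN r j' (by omega) (by omega) hjj.le (le_refl _)
        (by rintro ⟨h | h, -⟩ <;> omega)
  · intro r s hb; exact hout r s hb
  · intro r s hb; exact hin r s hb
  · intro r s hb hnc
    exact hdN r s hb.1 hb.2.1 hb.2.2.1 hb.2.2.2 hnc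
  · rintro r s ⟨h1 | h1, h2 | h2⟩ <;> subst h1 <;> subst h2
    · exact ne_N_of_eq qa (by simp)
    · exact ne_N_of_eq qb (by simp)
    · exact ne_N_of_eq qc (by simp)
    · exact ne_N_of_eq qd (by simp)

end Batch5

section Batch6
open DyckAux

def Phi (m n : ℕ) (p : ℕ → ℕ → Del) (q : ℕ → ℕ → DelN) : Prop :=
  Jinv p q ∧ Kinv m n p q ∧
    ∀ α, IsRect m n p α → prec m n p α α → ∀ r s, cornerOf α r s → q r s ≠ DelN.N

theorem cyclic_pred {m n : ℕ} {p : ℕ → ℕ → Del} {α : ℕ × ℕ × ℕ × ℕ}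
    (h : prec m n p α α) : ∃ β, prio m n p β α ∧ prec m n p β β := by
  obtain ⟨β, h1, h2⟩ := Relation.TransGen.tail'_iff.mp h
  exact ⟨β, h2, Relation.TransGen.head' h2 h1⟩

theorem Phi_step {m n : ℕ} {p : ℕ → ℕ → Del} {q q' : ℕ → ℕ → DelN}
    (hs : nstep m n q q') (hΦ : Phi m n p q) : Phi m n p q' := by
  obtain ⟨hJ, hK, hA⟩ := hΦ
  obtain ⟨R, hR, hout, hinN, hnc, hcne⟩ := nstep_box hJ hK hs
  refine ⟨Jinv_step hJ hs, Kinv_step hJ hK hs, ?_⟩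
  intro α hα hcyc r s hcorner
  by_cases hb : inBox R r s
  · by_cases hcR : cornerOf R r s
    · have heq : α = R := rect_unique hα hR hcorner hcR
      subst heq
      obtain ⟨β, hβα, hβcyc⟩ := cyclic_pred hcyc
      obtain ⟨hβrect, hαrect, hne, r', s', hcβ, hbox⟩ := hβα
      have hncβ : ¬ cornerOf α r' s' := fun hcc => hne (rect_unique hβrect hαrect hcβ hcc)
      exact absurd (hnc r' s' hbox hncβ) (hA β hβrect hβcyc r' s' hcβ)
    · exact absurd (hnc r s hb hcR) (hA α hα hcyc r s hcorner)
  · rw [hout r s hb]; exact hA α hα hcyc r s hcorner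

theorem Phi_chain {m n : ℕ} {p : ℕ → ℕ → Del} {q q' : ℕ → ℕ → DelN}
    (h : Relation.ReflTransGen (nstep m n) q q')
    (h0 : Phi m n p q) : Phi m n p q' := by
  induction h with
  | refl => exact h0
  | tail _ hbc ih => exact Phi_step hbc ih

theorem Phi_init {m n : ℕ} {p : ℕ → ℕ → Del} : Phi m n p (fun r s => embed (p r s)) := by
  refine ⟨fun r s => Or.inl rfl, ⟨?_, ?_⟩, ?_⟩
  · intro i hi a b hg
    have hab : b ≤ a := by
      by_contra hc; push_neg at hc
      exact embed_ne_N _ (hg.2.2.1 a (le_refl _) hc)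
    rw [show b - a = 0 by omega, List.take_zero]
    exact Relation.ReflTransGen.refl
  · intro j hj a b hg
    have hab : b ≤ a := by
      by_contra hc; push_neg at hc
      exact embed_ne_N _ (hg.2.2.1 a (le_refl _) hc)
    rw [show b - a = 0 by omega, List.take_zero]
    exact Relation.ReflTransGen.refl
  · intro α hα hcyc r s hc
    exact embed_ne_N _

theorem forward_dir {m n : ℕ} {p : ℕ → ℕ → Del} (hDN : DN m n p) :
    ∀ R, IsRect m n p R → ¬ prec m n p R R := by
  obtain ⟨hm, hn, qf, hchain, hfin⟩ := hDN
  intro R hR hcyc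
  have hΦ := Phi_chain hchain Phi_init
  have h1 : qf R.1 R.2.1 ≠ DelN.N :=
    hΦ.2.2 R hR hcyc R.1 R.2.1 ⟨Or.inl rfl, Or.inl rfl⟩
  exact h1 (hfin R.1 (lt_trans hR.1 hR.2.2.1) R.2.1 (lt_trans hR.2.1 hR.2.2.2.1))

end Batch6

section Batch7
open DyckAux

theorem rects_finite (m n : ℕ) (p : ℕ → ℕ → Del) :
    {R : ℕ × ℕ × ℕ × ℕ | IsRect m n p R}.Finite := by
  apply Set.Finite.subset
    (((Set.finite_Iio m).prod ((Set.finite_Iio n).prod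
      ((Set.finite_Iio m).prod (Set.finite_Iio n)))))
  rintro ⟨i, j, i', j'⟩ hR
  obtain ⟨h1, h2, h3, h4, -⟩ := hR
  dsimp only at h1 h2 h3 h4
  simp only [Set.mem_prod, Set.mem_Iio]
  exact ⟨by omega, by omega, by omega, by omega⟩

theorem exists_min {α : Type*} [DecidableEq α] (r : α → α → Prop)
    (htrans : ∀ {a b c}, r a b → r b c → r a c) (hirr : ∀ a, ¬ r a a) :
    ∀ s : Finset α, s.Nonempty → ∃ x ∈ s, ∀ y ∈ s, ¬ r y x := by
  intro s
  induction s using Finset.strongInduction with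
  | _ s ih =>
    intro hne
    obtain ⟨x, hx⟩ := hne
    by_cases hmin : ∀ y ∈ s, ¬ r y x
    · exact ⟨x, hx, hmin⟩
    · push_neg at hmin
      obtain ⟨y, hy, hr⟩ := hmin
      classical
      set t := s.filter (fun z => r z x) with ht
      have htss : t ⊂ s := by
        rw [Finset.ssubset_def]
        refine ⟨Finset.filter_subset _ _, fun hss => ?_⟩
        have := (Finset.mem_filter.mp (hss hx)).2
        exact hirr x this
      obtain ⟨z, hz, hzmin⟩ := ih t htss ⟨y, by simp [ht, hy, hr]⟩
      refine ⟨z, Finset.filter_subset _ _ hz, ?_⟩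
      intro w hw hrw
      have hzx : r z x := (Finset.mem_filter.mp hz).2
      exact hzmin w (Finset.mem_filter.mpr ⟨hw, htrans hrw hzx⟩) hrw

open Classical in
noncomputable def Qfun (p : ℕ → ℕ → Del) (D : Finset (ℕ × ℕ × ℕ × ℕ)) (r s : ℕ) : DelN :=
  if ∃ γ ∈ D, inBox γ r s then DelN.N else embed (p r s)

theorem Qfun_pos {p : ℕ → ℕ → Del} {D : Finset (ℕ × ℕ × ℕ × ℕ)} {r s : ℕ}
    (h : ∃ γ ∈ D, inBox γ r s) : Qfun p D r s = DelN.N := by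
  rw [Qfun, if_pos h]

theorem Qfun_neg {p : ℕ → ℕ → Del} {D : Finset (ℕ × ℕ × ℕ × ℕ)} {r s : ℕ}
    (h : ¬ ∃ γ ∈ D, inBox γ r s) : Qfun p D r s = embed (p r s) := by
  rw [Qfun, if_neg h]

theorem prec_irrefl {m n : ℕ} {p : ℕ → ℕ → Del}
    (hacyc : ∀ R, IsRect m n p R → ¬ prec m n p R R) : ∀ a, ¬ prec m n p a a := by
  intro a ha
  obtain ⟨b, hab, -⟩ := Relation.TransGen.head'_iff.mp ha
  exact hacyc a hab.1 ha

theorem backward_dir {m n : ℕ} {p : ℕ → ℕ → Del} (h : DQ m n p)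
    (hacyc : ∀ R, IsRect m n p R → ¬ prec m n p R R) : DN m n p := by
  classical
  obtain ⟨⟨hm, hn, -, -⟩, hcover⟩ := h
  set RF : Finset (ℕ × ℕ × ℕ × ℕ) := (rects_finite m n p).toFinset with hRF
  have hmemRF : ∀ R, R ∈ RF ↔ IsRect m n p R := by
    intro R; rw [hRF, Set.Finite.mem_toFinset]; rfl
  have main : ∀ k (s : Finset (ℕ × ℕ × ℕ × ℕ)), s.card = k → s ⊆ RF →
      (∀ α δ, prio m n p α δ → δ ∈ RF \ s → α ∈ RF \ s) →
      Relation.ReflTransGen (nstep m n) (Qfun p (RF \ s)) (Qfun p RF) := by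
    intro k
    induction k with
    | zero =>
      intro s hcard hsub hclosed
      have hse : s = ∅ := Finset.card_eq_zero.mp hcard
      subst hse
      rw [Finset.sdiff_empty]
    | succ k ih =>
      intro s hcard hsub hclosed
      have hne : s.Nonempty := Finset.card_pos.mp (by omega)
      obtain ⟨α, hαs, hαmin⟩ := exists_min (prec m n p)
        (fun h1 h2 => Relation.TransGen.trans h1 h2) (prec_irrefl hacyc) s hne
      have hαR : IsRect m n p α := (hmemRF α).mp (hsub hαs)
      have hαRF : α ∈ RF := hsub hαs
      obtain ⟨i, j, i', j'⟩ := α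
      have hii : i < i' := hαR.1
      have hjj : j < j' := hαR.2.1
      have him : i' < m := hαR.2.2.1
      have hjn : j' < n := hαR.2.2.2.1
      have la : p i j = Del.a := (rect_letters hαR).1
      have lb : p i j' = Del.b := (rect_letters hαR).2.1
      have lc : p i' j = Del.c := (rect_letters hαR).2.2.1
      have ld : p i' j' = Del.d := (rect_letters hαR).2.2.2
      -- no already-neutralized box covers a corner of α
      have hcornerfree : ∀ r s', cornerOf (i, j, i', j') r s' →
          ¬ ∃ γ ∈ RF \ s, inBox γ r s' := by
        rintro r s' hc ⟨γ, hγ, hγbox⟩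
        rw [Finset.mem_sdiff] at hγ
        by_cases hγα : γ = (i, j, i', j')
        · subst hγα; exact hγ.2 hαs
        · have hprio : prio m n p (i, j, i', j') γ :=
            ⟨hαR, (hmemRF γ).mp hγ.1, fun hh => hγα hh.symm, r, s', hc, hγbox⟩
          have := hclosed _ _ hprio (Finset.mem_sdiff.mpr hγ)
          rw [Finset.mem_sdiff] at this
          exact this.2 hαs
      have hstep : nstep m n (Qfun p (RF \ s)) (Qfun p (RF \ s.erase (i, j, i', j'))) := by
        refine ⟨i, j, i', j', hii, hjj, him, hjn, ?_, ?_, ?_, ?_, ?_, ?_, ?_⟩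
        · rw [Qfun_neg (hcornerfree i j ⟨Or.inl rfl, Or.inl rfl⟩), la]; rfl
        · rw [Qfun_neg (hcornerfree i j' ⟨Or.inl rfl, Or.inr rfl⟩), lb]; rfl
        · rw [Qfun_neg (hcornerfree i' j ⟨Or.inr rfl, Or.inl rfl⟩), lc]; rfl
        · rw [Qfun_neg (hcornerfree i' j' ⟨Or.inr rfl, Or.inr rfl⟩), ld]; rfl
        · -- non-corner cells inside the box are already N
          intro r s' h1 h2 h3 h4 hnc
          obtain ⟨γ, hγR, hγc⟩ := hcover r (by omega) s' (by omega)
          have hγα : γ ≠ (i, j, i', j') := by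
            intro hh; subst hh; exact hnc ⟨hγc.1, hγc.2⟩
          have hprio : prio m n p γ (i, j, i', j') :=
            ⟨hγR, hαR, hγα, r, s', hγc, ⟨h1, h2, h3, h4⟩⟩
          have hγns : γ ∉ s := fun hγs =>
            hαmin γ hγs (Relation.TransGen.single hprio)
          refine Qfun_pos ⟨γ, Finset.mem_sdiff.mpr ⟨(hmemRF γ).mpr hγR, hγns⟩, ?_⟩
          exact corner_inBox hγR.1.le hγR.2.1.le hγc
        · -- after the step the box is N
          intro r s' hb
          refine Qfun_pos ⟨(i, j, i', j'), ?_, hb⟩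
          rw [Finset.mem_sdiff]
          exact ⟨hαRF, fun hh => (Finset.mem_erase.mp hh).1 rfl⟩
        · -- outside the box nothing changes
          intro r s' hb
          by_cases h1 : ∃ γ ∈ RF \ s, inBox γ r s'
          · rw [Qfun_pos h1]
            obtain ⟨γ, hγ, hγbox⟩ := h1
            rw [Finset.mem_sdiff] at hγ
            refine Qfun_pos ⟨γ, Finset.mem_sdiff.mpr ⟨hγ.1, fun hh => hγ.2 (Finset.mem_erase.mp hh).2⟩, hγbox⟩
          · rw [Qfun_neg h1]
            refine Qfun_neg ?_
            rintro ⟨γ, hγ, hγbox⟩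
            rw [Finset.mem_sdiff, Finset.mem_erase] at hγ
            by_cases hγα : γ = (i, j, i', j')
            · subst hγα; exact hb ⟨hγbox.1, hγbox.2.1, hγbox.2.2.1, hγbox.2.2.2⟩
            · exact h1 ⟨γ, Finset.mem_sdiff.mpr ⟨hγ.1, fun hs' => hγ.2 ⟨hγα, hs'⟩⟩, hγbox⟩
      refine Relation.ReflTransGen.head hstep ?_
      refine ih (s.erase (i, j, i', j'))
        (by rw [Finset.card_erase_of_mem hαs]; omega)
        ((Finset.erase_subset _ _).trans hsub) ?_
      intro β δ hβδ hδ
      rw [Finset.mem_sdiff, Finset.mem_erase] at hδ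
      rw [Finset.mem_sdiff, Finset.mem_erase]
      have hβRF : β ∈ RF := (hmemRF β).mpr hβδ.1
      by_cases hδα : δ = (i, j, i', j')
      · subst hδα
        refine ⟨hβRF, fun hh => ?_⟩
        exact hαmin β hh.2 (Relation.TransGen.single hβδ)
      · have hδns : δ ∉ s := fun hs' => (hδ.2 ⟨hδα, hs'⟩)
        have := hclosed β δ hβδ (Finset.mem_sdiff.mpr ⟨hδ.1, hδns⟩)
        rw [Finset.mem_sdiff] at this
        exact ⟨this.1, fun hh => this.2 hh.2⟩
  have hchain := main RF.card RF rfl (le_refl _) (by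
    intro α δ hp hδ
    rw [Finset.sdiff_self] at hδ
    exact absurd hδ (Finset.notMem_empty δ))
  rw [Finset.sdiff_self] at hchain
  have hstart : Qfun p (∅ : Finset (ℕ × ℕ × ℕ × ℕ)) = fun r s => embed (p r s) := by
    funext r s
    exact Qfun_neg (by rintro ⟨γ, hγ, -⟩; exact absurd hγ (Finset.notMem_empty γ))
  rw [hstart] at hchain
  refine ⟨hm, hn, Qfun p RF, hchain, ?_⟩
  intro r hr s hs
  obtain ⟨γ, hγR, hγc⟩ := hcover r hr s hs
  exact Qfun_pos ⟨γ, (hmemRF γ).mpr hγR, corner_inBox hγR.1.le hγR.2.1.le hγc⟩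

end Batch7

/-- A quaternate Dyck crossword is neutralizable iff its precedence relation
is acyclic (equivalently, irreflexive). -/
theorem quaternate_neutralizable_iff_acyclic (m n : ℕ) (p : ℕ → ℕ → Del)
    (h : DQ m n p) :
    DN m n p ↔ ∀ R, IsRect m n p R → ¬ prec m n p R R :=
  ⟨fun hDN => forward_dir hDN, fun hac => backward_dir h hac⟩
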